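/- Let u : ℝ^N → ℂ be radially symmetric on the annulus 𝒞 = {D ≤ |x| ≤ 2D}. If |u(y)| > |u(x₀)|/2 for all y ∈ 𝒞 where x₀ maximizes |u| on 𝒞, then ∫_𝒞 |u|^{p+1} ≤ C D^{-2(1-s_c)} ρ^{(p+1)/2}, where ρ = D^{-2s_c} ∫_𝒞 |u|², for a constant C = C(N,p). -/

import Mathlib

open MeasureTheory Metric

/-- Let `u : ℝ^N → ℂ` be radially symmetric on `𝒞 = {D ≤ |x| ≤ 2D}`.
If `|u(y)| > |u(x₀)|/2` for all `y ∈ 𝒞`, where `x₀` maximizes `|u|` on `𝒞`, then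
`∫_𝒞 |u|^{p+1} ≤ C D^{-2(1-s_c)} ρ^{(p+1)/2}` with `ρ = D^{-2 s_c} ∫_𝒞 |u|²`,
for a constant `C = C(N,p)`. -/
theorem stmt5 (N : ℕ) (hN : 3 ≤ N) (p : ℝ) (hp1 : 1 + 4 / (N : ℝ) < p)
    (hp2 : p < ((N : ℝ) + 2) / ((N : ℝ) - 2)) :
    ∃ C > 0, ∀ (D : ℝ), 0 < D → ∀ (u : EuclideanSpace ℝ (Fin N) → ℂ),
      (∀ x y : EuclideanSpace ℝ (Fin N), ‖x‖ = ‖y‖ → u x = u y) →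
      ∀ x₀ ∈ {x : EuclideanSpace ℝ (Fin N) | D ≤ ‖x‖ ∧ ‖x‖ ≤ 2 * D},
      (∀ y ∈ {x : EuclideanSpace ℝ (Fin N) | D ≤ ‖x‖ ∧ ‖x‖ ≤ 2 * D}, ‖u y‖ ≤ ‖u x₀‖) →
      (∀ y ∈ {x : EuclideanSpace ℝ (Fin N) | D ≤ ‖x‖ ∧ ‖x‖ ≤ 2 * D}, ‖u x₀‖ / 2 < ‖u y‖) →
      (∫ x in {x : EuclideanSpace ℝ (Fin N) | D ≤ ‖x‖ ∧ ‖x‖ ≤ 2 * D}, ‖u x‖ ^ (p + 1))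
        ≤ C * D ^ (-(2 * (1 - ((N : ℝ) / 2 - 2 / (p - 1))))) *
          ((D ^ (-(2 * ((N : ℝ) / 2 - 2 / (p - 1)))) *
            ∫ x in {x : EuclideanSpace ℝ (Fin N) | D ≤ ‖x‖ ∧ ‖x‖ ≤ 2 * D}, ‖u x‖ ^ (2 : ℝ)) ^ ((p + 1) / 2)) := by
  have hN3 : (3:ℝ) ≤ (N:ℝ) := by exact_mod_cast hN
  have hNpos : (0:ℝ) < N := by linarith
  have hp : (1:ℝ) < p := by
    have h4 : (0:ℝ) < 4 / N := by positivity
    linarith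
  set B₁ : ENNReal := volume (ball (0 : EuclideanSpace ℝ (Fin N)) 1) with hB₁def
  have hB₁top : B₁ ≠ ⊤ :=
    ((measure_mono ball_subset_closedBall).trans_lt measure_closedBall_lt_top).ne
  have hB₁pos : 0 < B₁ := measure_ball_pos _ _ one_pos
  set κ : ℝ := ((2:ℝ)^N - 1) * B₁.toReal with hκdef
  have h2N : (1:ℝ) < 2 ^ N := one_lt_pow₀ (by norm_num) (by omega)
  have hB₁real : 0 < B₁.toReal := ENNReal.toReal_pos hB₁pos.ne' hB₁top
  have hκpos : 0 < κ := mul_pos (by linarith) hB₁real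
  refine ⟨2 ^ (p+1) * κ ^ (1 - (p+1)/2),
    mul_pos (Real.rpow_pos_of_pos two_pos _) (Real.rpow_pos_of_pos hκpos _), ?_⟩
  intro D hD u hrad x₀ hx₀ hmax hlow
  set S : Set (EuclideanSpace ℝ (Fin N)) := {x | D ≤ ‖x‖ ∧ ‖x‖ ≤ 2 * D} with hSdef
  have hSeq : S = closedBall (0 : EuclideanSpace ℝ (Fin N)) (2*D) \ ball 0 D := by
    ext x
    simp only [hSdef, Set.mem_setOf_eq, Set.mem_diff, mem_closedBall, mem_ball,
      dist_zero_right, not_lt]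
    tauto
  haveI : Nontrivial (EuclideanSpace ℝ (Fin N)) :=
    Module.nontrivial_of_finrank_pos (R := ℝ)
      (by rw [finrank_euclideanSpace_fin]; omega)
  have hSmeas : MeasurableSet S := by
    rw [hSeq]; exact measurableSet_closedBall.diff measurableSet_ball
  have hSfin : volume S < ⊤ := by
    rw [hSeq]
    exact (measure_mono Set.diff_subset).trans_lt measure_closedBall_lt_top
  have hvol : (volume S).toReal = κ * D ^ ((N:ℕ):ℝ) := by
    rw [hSeq, measure_diff
        (ball_subset_closedBall.trans (closedBall_subset_closedBall (by linarith)))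
        measurableSet_ball.nullMeasurableSet
        ((measure_mono ball_subset_closedBall).trans_lt measure_closedBall_lt_top).ne,
      Measure.addHaar_closedBall _ _ (by linarith : (0:ℝ) ≤ 2*D),
      Measure.addHaar_ball _ _ hD.le, finrank_euclideanSpace_fin, ← hB₁def]
    rw [ENNReal.toReal_sub_of_le
        (mul_le_mul_left (ENNReal.ofReal_le_ofReal
          (pow_le_pow_left₀ hD.le (by linarith) N)) _)
        (ENNReal.mul_ne_top ENNReal.ofReal_ne_top hB₁top),
      ENNReal.toReal_mul, ENNReal.toReal_mul,
      ENNReal.toReal_ofReal (by positivity), ENNReal.toReal_ofReal (by positivity)]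
    rw [Real.rpow_natCast, hκdef]
    ring
  set M : ℝ := ‖u x₀‖ with hMdef
  have hM : 0 < M := by
    have := hlow x₀ hx₀
    linarith
  by_cases hInt : IntegrableOn (fun x => ‖u x‖ ^ (p+1)) S volume
  · -- the main case
    have hpp1 : (0:ℝ) < p + 1 := by linarith
    have hmeasu : AEMeasurable (fun x => ‖u x‖) (volume.restrict S) := by
      have h1 : AEMeasurable (fun x => ‖u x‖ ^ (p+1)) (volume.restrict S) :=
        hInt.aestronglyMeasurable.aemeasurable
      have h2 : AEMeasurable (fun x => (‖u x‖ ^ (p+1)) ^ (1/(p+1))) (volume.restrict S) :=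
        (Real.continuous_rpow_const (by positivity)).measurable.comp_aemeasurable h1
      have : (fun x => (‖u x‖ ^ (p+1)) ^ (1/(p+1))) = fun x => ‖u x‖ := by
        funext x
        rw [← Real.rpow_mul (norm_nonneg _), mul_one_div, div_self hpp1.ne', Real.rpow_one]
      rwa [this] at h2
    have hmeas2 : AEStronglyMeasurable (fun x => ‖u x‖ ^ (2:ℝ)) (volume.restrict S) :=
      ((Real.continuous_rpow_const (by norm_num)).measurable.comp_aemeasurable
        hmeasu).aestronglyMeasurable
    have hInt2 : IntegrableOn (fun x => ‖u x‖ ^ (2:ℝ)) S volume := by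
      refine Integrable.mono' (g := fun _ => M ^ (2:ℝ))
        (integrableOn_const hSfin.ne) hmeas2 ?_
      refine ae_restrict_of_forall_mem hSmeas fun x hx => ?_
      rw [Real.norm_of_nonneg (Real.rpow_nonneg (norm_nonneg _) _)]
      exact Real.rpow_le_rpow (norm_nonneg _) (hmax x hx) (by norm_num)
    have hlow2 : (M/2) ^ (2:ℝ) * (volume S).toReal ≤ ∫ x in S, ‖u x‖ ^ (2:ℝ) := by
      have h := setIntegral_mono_on (f := fun _ => (M/2) ^ (2:ℝ))
        (integrableOn_const hSfin.ne) hInt2 hSmeas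
        (fun x hx => Real.rpow_le_rpow (by positivity) (hlow x hx).le (by norm_num))
      rwa [setIntegral_const, smul_eq_mul, mul_comm] at h
    have hup : (∫ x in S, ‖u x‖ ^ (p+1)) ≤ M ^ (p+1) * (volume S).toReal := by
      have h := setIntegral_mono_on hInt (g := fun _ => M ^ (p+1))
        (integrableOn_const hSfin.ne) hSmeas
        (fun x hx => Real.rpow_le_rpow (norm_nonneg _) (hmax x hx) hpp1.le)
      rwa [setIntegral_const, smul_eq_mul, mul_comm] at h
    -- abbreviations
    set a : ℝ := -(2 * (1 - ((N : ℝ) / 2 - 2 / (p - 1)))) with hadef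
    set b : ℝ := -(2 * ((N : ℝ) / 2 - 2 / (p - 1))) with hbdef
    set q : ℝ := (p+1)/2 with hqdef
    have hq : 0 < q := by rw [hqdef]; linarith
    have hI2 : (M/2) ^ (2:ℝ) * (κ * D ^ ((N:ℕ):ℝ)) ≤ ∫ x in S, ‖u x‖ ^ (2:ℝ) := by
      rw [← hvol]; exact hlow2
    have halg : (2 ^ (p+1) * κ ^ (1 - q)) * D ^ a *
        ((D ^ b * ((M/2) ^ (2:ℝ) * (κ * D ^ ((N:ℕ):ℝ)))) ^ q)
        = M ^ (p+1) * (κ * D ^ ((N:ℕ):ℝ)) := by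
      rw [Real.mul_rpow (Real.rpow_nonneg hD.le _) (by positivity),
        Real.mul_rpow (Real.rpow_nonneg (by positivity) _) (by positivity),
        Real.mul_rpow hκpos.le (Real.rpow_nonneg hD.le _),
        ← Real.rpow_mul hD.le, ← Real.rpow_mul (by positivity : (0:ℝ) ≤ M/2),
        ← Real.rpow_mul hD.le,
        Real.div_rpow hM.le (by norm_num : (0:ℝ) ≤ 2)]
      have h2q : (2:ℝ) * q = p + 1 := by rw [hqdef]; ring
      rw [h2q]
      have hexp : a + (b*q + ((N:ℕ):ℝ) * q) = ((N:ℕ):ℝ) := by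
        rw [hadef, hbdef, hqdef]
        have hpne : p - 1 ≠ 0 := by
          intro h; rw [sub_eq_zero] at h; exact absurd h.symm hp.ne
        field_simp
        ring
      have hDall : D ^ a * (D ^ (b*q) * D ^ (((N:ℕ):ℝ) * q)) = D ^ ((N:ℕ):ℝ) := by
        rw [← Real.rpow_add hD, ← Real.rpow_add hD, hexp]
      have hκcomb : κ ^ (1 - q) * κ ^ q = κ := by
        rw [← Real.rpow_add hκpos, sub_add_cancel, Real.rpow_one]
      have h2cancel : (2:ℝ) ^ (p+1) * (M ^ (p+1) / 2 ^ (p+1)) = M ^ (p+1) := by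
        have h2 : ((2:ℝ) ^ (p+1)) ≠ 0 := (Real.rpow_pos_of_pos two_pos _).ne'
        field_simp
      calc 2 ^ (p + 1) * κ ^ (1 - q) * D ^ a *
            (D ^ (b * q) * (M ^ (p+1) / 2 ^ (p+1) * (κ ^ q * D ^ (((N:ℕ):ℝ) * q))))
          = (2 ^ (p + 1) * (M ^ (p+1) / 2 ^ (p+1))) * ((κ ^ (1-q) * κ ^ q) *
            (D ^ a * (D ^ (b*q) * D ^ (((N:ℕ):ℝ) * q)))) := by
            ring
        _ = M ^ (p+1) * (κ * D ^ ((N:ℕ):ℝ)) := by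
            rw [h2cancel, hκcomb, hDall]
    calc (∫ x in S, ‖u x‖ ^ (p+1))
        ≤ M ^ (p+1) * (volume S).toReal := hup
      _ = M ^ (p+1) * (κ * D ^ ((N:ℕ):ℝ)) := by rw [hvol]
      _ = (2 ^ (p+1) * κ ^ (1 - q)) * D ^ a *
            ((D ^ b * ((M/2) ^ (2:ℝ) * (κ * D ^ ((N:ℕ):ℝ)))) ^ q) := halg.symm
      _ ≤ (2 ^ (p+1) * κ ^ (1 - q)) * D ^ a *
            ((D ^ b * ∫ x in S, ‖u x‖ ^ (2:ℝ)) ^ q) := by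
          apply mul_le_mul_of_nonneg_left
          · apply Real.rpow_le_rpow
            · positivity
            · exact mul_le_mul_of_nonneg_left hI2 (Real.rpow_nonneg hD.le _)
            · exact hq.le
          · have : (0:ℝ) < 2 ^ (p+1) * κ ^ (1 - q) :=
              mul_pos (Real.rpow_pos_of_pos two_pos _) (Real.rpow_pos_of_pos hκpos _)
            positivity
  · rw [integral_undef hInt]
    have hI2nn : 0 ≤ ∫ x in S, ‖u x‖ ^ (2:ℝ) :=
      integral_nonneg fun x => Real.rpow_nonneg (norm_nonneg _) _
    have hC : (0:ℝ) < 2 ^ (p+1) * κ ^ (1 - (p+1)/2) :=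
      mul_pos (Real.rpow_pos_of_pos two_pos _) (Real.rpow_pos_of_pos hκpos _)
    apply mul_nonneg (mul_nonneg hC.le (Real.rpow_nonneg hD.le _))
    exact Real.rpow_nonneg (mul_nonneg (Real.rpow_nonneg hD.le _) hI2nn) _
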